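/- The period function satisfies the asymptotic T(z) ~ -3 ln z as z → 0^+, i.e. lim_{z→0^+} T(z)/(-3 ln z) = 1. -/

import Mathlib

open Set Real Filter MeasureTheory intervalIntegral

/-- θ(w) ∈ (0,π) with cos θ(w) = 2w - 1. -/
noncomputable def theta (w : ℝ) : ℝ := Real.arccos (2 * w - 1)

/-- Smallest root of x(1-x)² = 4z in (0,1). -/
noncomputable def xminf (z : ℝ) : ℝ := (2 / 3) * (1 - Real.sin (theta (27 * z) / 3 + π / 6))

/-- Largest root of x(1-x)² = 4z in (0,1). -/
noncomputable def xmaxf (z : ℝ) : ℝ := (2 / 3) * (1 + Real.sin (theta (27 * z) / 3 - π / 6))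

lemma theta_mem {z : ℝ} (hz : 0 < z) (hz' : z < 1/27) :
    theta (27 * z) ∈ Ioo 0 π ∧ Real.cos (theta (27 * z)) = 54 * z - 1 := by
  have h1 : (-1:ℝ) < 2 * (27 * z) - 1 := by nlinarith
  have h2 : 2 * (27 * z) - 1 < 1 := by nlinarith
  refine ⟨⟨Real.arccos_pos.2 h2, ?_⟩, ?_⟩
  · rw [theta, Real.arccos, sub_lt_iff_lt_add]
    have := Real.neg_pi_div_two_lt_arcsin.2 h1
    linarith
  · rw [theta, Real.cos_arccos (by linarith) (by linarith)]
    ring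

lemma xminf_root {z : ℝ} (hz : 0 < z) (hz' : z < 1/27) :
    xminf z ∈ Ioo 0 (1/3) ∧ xminf z * (1 - xminf z)^2 = 4 * z := by
  obtain ⟨⟨hθ0, hθπ⟩, hcos⟩ := theta_mem hz hz'
  set θ := theta (27 * z) with hθ
  have hsin : Real.sin (θ/3 + π/6) = Real.cos ((π - θ)/3) := by
    rw [← Real.cos_pi_div_two_sub]; ring_nf
  set c := Real.cos ((π - θ)/3) with hc
  have hkey : 4 * c^3 - 3 * c = 1 - 54 * z := by
    have h3 : Real.cos (3 * ((π - θ)/3)) = 4 * c^3 - 3 * c := Real.cos_three_mul _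
    have : (3 : ℝ) * ((π - θ)/3) = π - θ := by ring
    rw [this, Real.cos_pi_sub, hcos] at h3
    linarith
  have hπ := Real.pi_pos
  have harg0 : 0 < (π - θ)/3 := by linarith
  have harg1 : (π - θ)/3 < π/3 := by linarith
  have hcub : 1/2 < c := by
    have := Real.cos_lt_cos_of_nonneg_of_le_pi (le_of_lt harg0) (by linarith) harg1
    rwa [Real.cos_pi_div_three] at this
  have hclt : c < 1 := by
    have := Real.cos_lt_cos_of_nonneg_of_le_pi (le_refl 0) (by linarith) harg0
    rwa [Real.cos_zero] at this
  have hx : xminf z = (2/3) * (1 - c) := by rw [xminf, ← hθ, hsin]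
  constructor
  · rw [hx]; constructor <;> nlinarith
  · rw [hx]; nlinarith [hkey]

lemma xmaxf_root {z : ℝ} (hz : 0 < z) (hz' : z < 1/27) :
    xmaxf z ∈ Ioo (1/3) 1 ∧ xmaxf z * (1 - xmaxf z)^2 = 4 * z := by
  obtain ⟨⟨hθ0, hθπ⟩, hcos⟩ := theta_mem hz hz'
  set θ := theta (27 * z) with hθ
  have hsin : Real.sin (θ/3 - π/6) = Real.cos ((2*π - θ)/3) := by
    rw [← Real.cos_pi_div_two_sub]; ring_nf
  set c := Real.cos ((2*π - θ)/3) with hc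
  have hkey : 4 * c^3 - 3 * c = 54 * z - 1 := by
    have h3 : Real.cos (3 * ((2*π - θ)/3)) = 4 * c^3 - 3 * c := Real.cos_three_mul _
    have h4 : (3 : ℝ) * ((2*π - θ)/3) = 2*π - θ := by ring
    rw [h4] at h3
    rw [show 2*π - θ = (-θ) + 2*π by ring, Real.cos_add_two_pi, Real.cos_neg, hcos] at h3
    linarith
  have hπ := Real.pi_pos
  have harg0 : π/3 < (2*π - θ)/3 := by linarith
  have harg1 : (2*π - θ)/3 < 2*π/3 := by linarith
  have hcub : c < 1/2 := by
    have := Real.cos_lt_cos_of_nonneg_of_le_pi (by positivity) (by linarith) harg0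
    rwa [Real.cos_pi_div_three] at this
  have hclt : -(1/2) < c := by
    have := Real.cos_lt_cos_of_nonneg_of_le_pi (by linarith) (by linarith) harg1
    rw [show 2*π/3 = π - π/3 by ring, Real.cos_pi_sub, Real.cos_pi_div_three] at this
    linarith
  have hx : xmaxf z = (2/3) * (1 + c) := by rw [xmaxf, ← hθ, hsin]
  constructor
  · rw [hx]; constructor <;> nlinarith
  · rw [hx]; nlinarith [hkey]

lemma le_of_sq_le_sq' {a b : ℝ} (ha : 0 ≤ a) (hb : 0 ≤ b) (h : a^2 ≤ b^2) : a ≤ b := by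
  nlinarith

lemma aux9 {s : ℝ} (h0 : 0 < s) (h1 : s < 1/100) : 9*(s*s) ≤ s := by nlinarith

structure RootData (z r1 r2 r3 : ℝ) : Prop where
  hz : 0 < z
  hzs : z < 1/10000
  h1l : 4*z ≤ r1
  h1u : r1 ≤ 9*z
  h1third : r1 < 1/3
  h2third : 1/3 < r2
  h2lt1 : r2 < 1
  h2l : 2*Real.sqrt z ≤ 1 - r2
  h2u : 1 - r2 ≤ 4*Real.sqrt z
  h3l : 1 + Real.sqrt z ≤ r3
  h3u : r3 ≤ 1 + 4*Real.sqrt z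
  fac : ∀ x : ℝ, x*(1-x)^2 - 4*z = (x - r1)*(x - r2)*(x - r3)

section
variable {z r1 r2 r3 : ℝ}

lemma RootData.sq_pos (h : RootData z r1 r2 r3) : 0 < Real.sqrt z := Real.sqrt_pos.2 h.hz
lemma RootData.sq_small (h : RootData z r1 r2 r3) : Real.sqrt z < 1/100 := by
  have : Real.sqrt z < Real.sqrt (1/10000) := by
    exact Real.sqrt_lt_sqrt (le_of_lt h.hz) h.hzs
  rwa [show (1:ℝ)/10000 = (1/100)^2 by norm_num, Real.sqrt_sq (by norm_num)] at this
lemma RootData.h1pos (h : RootData z r1 r2 r3) : 0 < r1 := lt_of_lt_of_le (by linarith [h.hz]) h.h1l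
lemma RootData.h12 (h : RootData z r1 r2 r3) : r1 < r2 := lt_trans h.h1third h.h2third
lemma RootData.h32l (h : RootData z r1 r2 r3) : 3*Real.sqrt z ≤ r3 - r2 := by
  have := h.h2l; have := h.h3l; linarith
lemma RootData.h32u (h : RootData z r1 r2 r3) : r3 - r2 ≤ 8*Real.sqrt z := by
  have := h.h2u; have := h.h3u; linarith

end

lemma rootData {z : ℝ} (hz : 0 < z) (hzs : z < 1/10000) :
    RootData z (xminf z) (xmaxf z) (2 - xminf z - xmaxf z) := by
  have hz' : z < 1/27 := by linarith
  obtain ⟨⟨h1p, h1t⟩, h1⟩ := xminf_root hz hz'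
  obtain ⟨⟨h2t, h2o⟩, h2⟩ := xmaxf_root hz hz'
  set r1 := xminf z
  set r2 := xmaxf z
  have hsq : 0 < Real.sqrt z := Real.sqrt_pos.2 hz
  have hsqz : Real.sqrt z ^ 2 = z := Real.sq_sqrt (le_of_lt hz)
  have hsqs : Real.sqrt z < 1/100 := by
    have : Real.sqrt z < Real.sqrt (1/10000) := Real.sqrt_lt_sqrt (le_of_lt hz) hzs
    rwa [show (1:ℝ)/10000 = (1/100)^2 by norm_num, Real.sqrt_sq (by norm_num)] at this
  -- r1 bounds
  have e1 : (1-r1)^2 ≤ 1 := by nlinarith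
  have e2 : (4:ℝ)/9 ≤ (1-r1)^2 := by nlinarith
  have h1l : 4*z ≤ r1 := by nlinarith [mul_le_mul_of_nonneg_left e1 h1p.le]
  have h1u : r1 ≤ 9*z := by nlinarith [mul_le_mul_of_nonneg_left e2 h1p.le]
  -- r2 bounds
  have f1 : 4*z ≤ (1-r2)^2 := by nlinarith [sq_nonneg (1-r2)]
  have f2 : (1-r2)^2 ≤ 12*z := by nlinarith [sq_nonneg (1-r2)]
  have h2l : 2*Real.sqrt z ≤ 1 - r2 := by
    refine le_of_sq_le_sq' (by positivity) (by linarith) ?_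
    calc (2*Real.sqrt z)^2 = 4*z := by rw [mul_pow]; rw [hsqz]; ring
    _ ≤ (1-r2)^2 := f1
  have h2u : 1 - r2 ≤ 4*Real.sqrt z := by
    refine le_of_sq_le_sq' (by linarith) (by positivity) ?_
    calc (1-r2)^2 ≤ 12*z := f2
    _ ≤ (4*Real.sqrt z)^2 := by rw [mul_pow]; rw [hsqz]; nlinarith
  -- factorization
  have hne : r1 - r2 ≠ 0 := by intro h; nlinarith
  have hE0 : (r1 - r2) * (r1^2 + r1*r2 + r2^2 - 2*r1 - 2*r2 + 1) = 0 := by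
    linear_combination h1 - h2
  have hE : r1^2 + r1*r2 + r2^2 - 2*r1 - 2*r2 + 1 = 0 :=
    (mul_eq_zero.1 hE0).resolve_left hne
  have fac : ∀ x : ℝ, x*(1-x)^2 - 4*z = (x - r1)*(x - r2)*(x - (2 - r1 - r2)) := by
    intro x
    linear_combination (x - r1) * hE + h1
  refine ⟨hz, hzs, h1l, h1u, h1t, h2t, h2o, h2l, h2u, ?_, ?_, fac⟩
  · -- 1 + √z ≤ r3 = 2 - r1 - r2
    have h9 : 9*z ≤ Real.sqrt z := by
      have hzz : z = Real.sqrt z * Real.sqrt z := (Real.mul_self_sqrt hz.le).symm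
      calc 9*z = 9*(Real.sqrt z * Real.sqrt z) := by rw [← hzz]
      _ ≤ Real.sqrt z := aux9 hsq hsqs
    linarith
  · have : 0 ≤ r1 := le_of_lt (lt_of_lt_of_le (by linarith) h1l)
    linarith

lemma integ_inv_sqrt_shift (a b : ℝ) :
    IntervalIntegrable (fun x => (Real.sqrt (x - a))⁻¹) volume a b := by
  have base : IntervalIntegrable (fun x : ℝ => x ^ (-(1/2) : ℝ)) volume 0 (b - a) :=
    intervalIntegral.intervalIntegrable_rpow' (by norm_num)
  have shifted := base.comp_sub_right a
  rw [zero_add, sub_add_cancel] at shifted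
  apply shifted.mono_fun
  · exact ((measurable_id.sub_const a).sqrt.inv).aestronglyMeasurable
  · filter_upwards [MeasureTheory.ae_restrict_mem measurableSet_uIoc] with x _
    rcases le_or_gt x a with h | h
    · have h0 : Real.sqrt (x - a) = 0 := Real.sqrt_eq_zero'.2 (by linarith)
      simp [h0]
    · have hxa : (0:ℝ) < x - a := by linarith
      rw [Real.norm_eq_abs, Real.norm_eq_abs, abs_of_nonneg (by positivity),
        abs_of_nonneg (Real.rpow_nonneg hxa.le _), Real.rpow_neg hxa.le,
        Real.sqrt_eq_rpow]

lemma integ_inv_sqrt_shift' (a b : ℝ) :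
    IntervalIntegrable (fun x => (Real.sqrt (b - x))⁻¹) volume a b := by
  have base := integ_inv_sqrt_shift 0 (b - a)
  simp only [sub_zero] at base
  have h2 := base.comp_sub_left b
  simp only [sub_zero, sub_sub_cancel] at h2
  exact h2.symm

lemma inv_sqrt_le {A B : ℝ} (hB : 0 < B) (h : B ≤ A) : (Real.sqrt A)⁻¹ ≤ (Real.sqrt B)⁻¹ :=
  inv_anti₀ (Real.sqrt_pos.2 hB) (Real.sqrt_le_sqrt h)

lemma inv_sqrt_mul {c : ℝ} (hc : 0 ≤ c) (t : ℝ) :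
    (Real.sqrt (c*t))⁻¹ = (Real.sqrt c)⁻¹ * (Real.sqrt t)⁻¹ := by
  rw [Real.sqrt_mul hc, mul_inv]

lemma model1_integrable {a b : ℝ} (ha : 0 < a) (hab : a ≤ b) :
    IntervalIntegrable (fun x => (Real.sqrt (x*(x-a)))⁻¹) volume a b := by
  apply ((integ_inv_sqrt_shift a b).const_mul ((Real.sqrt a)⁻¹)).mono_fun
  · apply Measurable.aestronglyMeasurable
    exact ((measurable_id.mul (measurable_id.sub_const a)).sqrt).inv
  · rw [uIoc_of_le hab]
    filter_upwards [MeasureTheory.ae_restrict_mem measurableSet_Ioc] with x hx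
    · have h : a < x := hx.1
      have hxa : (0:ℝ) < x - a := by linarith
      rw [Real.norm_eq_abs, Real.norm_eq_abs, abs_of_nonneg (by positivity), abs_of_nonneg (by positivity),
        ← inv_sqrt_mul ha.le]
      exact inv_sqrt_le (by positivity) (by nlinarith)

lemma model1_integral {a b : ℝ} (ha : 0 < a) (hab : a ≤ b) :
    ∫ x in a..b, (Real.sqrt (x*(x-a)))⁻¹
      = 2*Real.log (Real.sqrt b + Real.sqrt (b-a)) - Real.log a := by
  have key := intervalIntegral.integral_eq_sub_of_hasDeriv_right_of_le hab
    (f := fun x => 2 * Real.log (Real.sqrt x + Real.sqrt (x - a)))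
    (f' := fun x => (Real.sqrt (x*(x-a)))⁻¹) ?_ ?_ (model1_integrable ha hab)
  · rw [key]
    rw [sub_self, Real.sqrt_zero, add_zero, Real.log_sqrt ha.le]
    ring
  · have hc : ContinuousOn (fun x : ℝ => Real.sqrt x + Real.sqrt (x - a)) (Icc a b) :=
      (Real.continuous_sqrt.continuousOn).add
        ((Real.continuous_sqrt.comp (continuous_id.sub continuous_const)).continuousOn)
    refine continuousOn_const.mul (hc.log fun x hx => ?_)
    have hxp : 0 < Real.sqrt x := Real.sqrt_pos.2 (lt_of_lt_of_le ha hx.1)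
    have : 0 ≤ Real.sqrt (x - a) := Real.sqrt_nonneg _
    positivity
  · intro x hx
    have hx0 : 0 < x := lt_of_lt_of_le ha (le_of_lt hx.1)
    have hxa : 0 < x - a := by have := hx.1; linarith
    have s1 : 0 < Real.sqrt x := Real.sqrt_pos.2 hx0
    have s2 : 0 < Real.sqrt (x - a) := Real.sqrt_pos.2 hxa
    have h1 : HasDerivAt Real.sqrt (1/(2*Real.sqrt x)) x := Real.hasDerivAt_sqrt (ne_of_gt hx0)
    have h2 : HasDerivAt (fun y => Real.sqrt (y - a)) (1/(2*Real.sqrt (x-a))) x := by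
      have := (Real.hasDerivAt_sqrt (ne_of_gt hxa)).comp x ((hasDerivAt_id x).sub_const a)
      simpa [Function.comp_def] using this
    have hsum := h1.add h2
    have hne : Real.sqrt x + Real.sqrt (x - a) ≠ 0 := by positivity
    have hlog := (hsum.log hne).const_mul (2:ℝ)
    have heq : 2 * ((1/(2*Real.sqrt x) + 1/(2*Real.sqrt (x-a))) / (Real.sqrt x + Real.sqrt (x-a)))
        = (Real.sqrt (x*(x-a)))⁻¹ := by
      rw [Real.sqrt_mul hx0.le]
      have hs1 : Real.sqrt x ^ 2 = x := Real.sq_sqrt hx0.le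
      field_simp
      ring
    simp only [Pi.add_apply] at hlog
    rw [heq] at hlog
    exact hlog.hasDerivWithinAt

lemma model2_integrable {c r2 r3 : ℝ} (hc : c ≤ r2) (h23 : r2 < r3) :
    IntervalIntegrable (fun x => (Real.sqrt ((r2-x)*(r3-x)))⁻¹) volume c r2 := by
  apply ((integ_inv_sqrt_shift' c r2).const_mul ((Real.sqrt (r3-r2))⁻¹)).mono_fun
  · apply Measurable.aestronglyMeasurable
    exact (((measurable_const.sub measurable_id).mul (measurable_const.sub measurable_id)).sqrt).inv
  · rw [uIoc_of_le hc]
    filter_upwards [MeasureTheory.ae_restrict_mem measurableSet_Ioc] with x hx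
    rcases eq_or_lt_of_le hx.2 with h | h
    · have h0 : r2 - x = 0 := by rw [h]; ring
      rw [Real.norm_eq_abs, Real.norm_eq_abs, abs_of_nonneg (by positivity),
        abs_of_nonneg (by positivity), h0]
      simp
    · have h1 : (0:ℝ) < r2 - x := by linarith
      have h2 : (0:ℝ) < r3 - r2 := by linarith
      rw [Real.norm_eq_abs, Real.norm_eq_abs, abs_of_nonneg (by positivity),
        abs_of_nonneg (by positivity), show (Real.sqrt (r3-r2))⁻¹ * (Real.sqrt (r2-x))⁻¹
          = (Real.sqrt ((r3-r2)*(r2-x)))⁻¹ from (inv_sqrt_mul h2.le _).symm]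
      exact inv_sqrt_le (by positivity) (by nlinarith)

lemma model2_integral {c r2 r3 : ℝ} (hc : c ≤ r2) (h23 : r2 < r3) :
    ∫ x in c..r2, (Real.sqrt ((r2-x)*(r3-x)))⁻¹
      = 2*Real.log (Real.sqrt (r3-c) + Real.sqrt (r2-c)) - Real.log (r3-r2) := by
  have step1 : ∫ x in c..r2, (Real.sqrt ((r2-x)*(r3-x)))⁻¹
      = ∫ x in c..r2, (fun y => (Real.sqrt (y*(y-(r3-r2))))⁻¹) (r3 - x) := by
    apply intervalIntegral.integral_congr
    intro x _
    simp only
    rw [show (r3-x)*((r3-x)-(r3-r2)) = (r2-x)*(r3-x) by ring]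
  rw [step1, intervalIntegral.integral_comp_sub_left (fun y => (Real.sqrt (y*(y-(r3-r2))))⁻¹) r3,
    model1_integral (by linarith) (by linarith),
    show (r3-c)-(r3-r2) = r2 - c by ring]

noncomputable def gfun (r1 r2 r3 : ℝ) : ℝ → ℝ :=
  fun x => (Real.sqrt (x*(x-r1)*((r2-x)*(r3-x))))⁻¹

lemma gfun_nonneg (r1 r2 r3 x : ℝ) : 0 ≤ gfun r1 r2 r3 x := by
  unfold gfun; positivity

lemma gfun_meas (r1 r2 r3 : ℝ) : Measurable (gfun r1 r2 r3) := by
  unfold gfun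
  exact (((measurable_id.mul (measurable_id.sub_const r1)).mul
    ((measurable_const.sub measurable_id).mul (measurable_const.sub measurable_id))).sqrt).inv

-- generic: integrable when dominated by C(x-a)^{-1/2} near left endpoint
lemma integrable_dom1 {a b C : ℝ} (hC : 0 < C) (f : ℝ → ℝ)
    (hm : Measurable f) (hf0 : ∀ x, 0 ≤ f x) (hab : a ≤ b)
    (hdom : ∀ x ∈ Ioc a b, f x ≤ (Real.sqrt (C*(x-a)))⁻¹) :
    IntervalIntegrable f volume a b := by
  apply ((integ_inv_sqrt_shift a b).const_mul ((Real.sqrt C)⁻¹)).mono_fun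
    hm.aestronglyMeasurable
  rw [uIoc_of_le hab]
  filter_upwards [MeasureTheory.ae_restrict_mem measurableSet_Ioc] with x hx
  rw [Real.norm_eq_abs, Real.norm_eq_abs, abs_of_nonneg (hf0 x),
    abs_of_nonneg (by positivity), ← inv_sqrt_mul hC.le]
  exact hdom x hx

lemma integrable_dom2 {a b C : ℝ} (hC : 0 < C) (f : ℝ → ℝ)
    (hm : Measurable f) (hf0 : ∀ x, 0 ≤ f x) (hab : a ≤ b)
    (hdom : ∀ x ∈ Ioc a b, f x ≤ (Real.sqrt (C*(b-x)))⁻¹) :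
    IntervalIntegrable f volume a b := by
  apply ((integ_inv_sqrt_shift' a b).const_mul ((Real.sqrt C)⁻¹)).mono_fun
    hm.aestronglyMeasurable
  rw [uIoc_of_le hab]
  filter_upwards [MeasureTheory.ae_restrict_mem measurableSet_Ioc] with x hx
  rw [Real.norm_eq_abs, Real.norm_eq_abs, abs_of_nonneg (hf0 x),
    abs_of_nonneg (by positivity), ← inv_sqrt_mul hC.le]
  exact hdom x hx

lemma chain_facts {z r1 r2 r3 δ : ℝ} (h : RootData z r1 r2 r3)
    (hδ0 : 0 < δ) (hδ1 : δ ≤ 1/100) (hzδ : Real.sqrt z < δ/10) :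
    0 < r1 ∧ r1 < δ/2 ∧ δ < 1 - δ ∧ 1 - r2 < δ/2 ∧ r2 < r3 ∧ r2*r3 ≤ 1 := by
  have hsq := h.sq_pos
  have hsqz : Real.sqrt z ^ 2 = z := Real.sq_sqrt h.hz.le
  have h1u := h.h1u
  have h2u := h.h2u
  have h32 := h.h32l
  refine ⟨h.h1pos, by nlinarith, by nlinarith, by nlinarith, by nlinarith, ?_⟩
  have hprod : r1 * (r2 * r3) = 4*z := by
    have := h.fac 0
    nlinarith [this]
  nlinarith [h.h1pos, h.h1l]

set_option maxHeartbeats 1600000 in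
lemma piece1 {z r1 r2 r3 δ : ℝ} (h : RootData z r1 r2 r3)
    (hδ0 : 0 < δ) (hδ1 : δ ≤ 1/100) (hzδ : Real.sqrt z < δ/10) :
    IntervalIntegrable (gfun r1 r2 r3) volume r1 δ ∧
    Real.log δ - Real.log z - 4 ≤ ∫ x in r1..δ, gfun r1 r2 r3 x ∧
    ∫ x in r1..δ, gfun r1 r2 r3 x ≤ (1-2*δ)⁻¹ * (-Real.log z) := by
  obtain ⟨h1p, hr1δ2, hδδ, h2δ, h23, h231⟩ := chain_facts h hδ0 hδ1 hzδ
  have hr1δ : r1 < δ := by linarith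
  have hr2δ : δ < r2 := by linarith
  have hr3δ : δ < r3 := by linarith
  have hδ2 : (1:ℝ) - 2*δ > 0 := by linarith
  -- pointwise bounds on Icc r1 δ
  have hup : ∀ x ∈ Icc r1 δ, gfun r1 r2 r3 x ≤ (1-2*δ)⁻¹ * (Real.sqrt (x*(x-r1)))⁻¹ := by
    intro x hx
    rcases eq_or_lt_of_le hx.1 with he | hlt
    · unfold gfun
      rw [← he, sub_self, mul_zero, zero_mul, Real.sqrt_zero, inv_zero]
      positivity
    · have hx0 : 0 < x := lt_trans h1p hlt
      have hxr : 0 < x - r1 := by linarith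
      have hB : (1-2*δ)^2 ≤ (r2-x)*(r3-x) := by
        have hb1 : r2 - δ ≤ r2 - x := by linarith [hx.2]
        have hb2 : r3 - δ ≤ r3 - x := by linarith [hx.2]
        nlinarith [h.h2l, h.h3l, h.sq_pos, hx.2]
      have hQ : (1-2*δ)^2 * (x*(x-r1)) ≤ x*(x-r1)*((r2-x)*(r3-x)) :=  by
        nlinarith [mul_le_mul_of_nonneg_left hB (by positivity : (0:ℝ) ≤ x*(x-r1))]
      unfold gfun
      calc (Real.sqrt (x*(x-r1)*((r2-x)*(r3-x))))⁻¹
          ≤ (Real.sqrt ((1-2*δ)^2 * (x*(x-r1))))⁻¹ := inv_sqrt_le (by positivity) hQ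
        _ = (1-2*δ)⁻¹ * (Real.sqrt (x*(x-r1)))⁻¹ := by
            rw [inv_sqrt_mul (by positivity), Real.sqrt_sq hδ2.le]
  have hlow : ∀ x ∈ Icc r1 δ, (Real.sqrt (x*(x-r1)))⁻¹ ≤ gfun r1 r2 r3 x := by
    intro x hx
    rcases eq_or_lt_of_le hx.1 with he | hlt
    · unfold gfun
      rw [← he, sub_self, mul_zero, zero_mul, Real.sqrt_zero, inv_zero]
    · have hx0 : 0 < x := lt_trans h1p hlt
      have hxr : 0 < x - r1 := by linarith
      have hB : (r2-x)*(r3-x) ≤ 1 := by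
        have h2x : 0 ≤ r2 - x := by linarith [hx.2]
        have h3x : 0 ≤ r3 - x := by linarith [hx.2]
        nlinarith [h231]
      have hQ : x*(x-r1)*((r2-x)*(r3-x)) ≤ x*(x-r1) := by
        nlinarith [mul_le_mul_of_nonneg_left hB (by positivity : (0:ℝ) ≤ x*(x-r1))]
      unfold gfun
      exact inv_sqrt_le (mul_pos (mul_pos hx0 hxr)
        (mul_pos (by linarith [hx.2] : (0:ℝ) < r2 - x) (by linarith [hx.2] : (0:ℝ) < r3 - x))) hQ
  -- integrability
  have hgint : IntervalIntegrable (gfun r1 r2 r3) volume r1 δ := by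
    have hCpos : (0:ℝ) < r1*((r2-δ)*(r3-δ)) :=
      mul_pos h1p (mul_pos (by linarith) (by linarith))
    apply integrable_dom1 (C := r1*((r2-δ)*(r3-δ))) hCpos
      _ (gfun_meas r1 r2 r3) (gfun_nonneg r1 r2 r3) hr1δ.le
    intro x hx
    have hx0 : 0 < x := lt_trans h1p hx.1
    have hxr : 0 < x - r1 := by linarith [hx.1]
    have hQ : r1*((r2-δ)*(r3-δ))*(x-r1) ≤ x*(x-r1)*((r2-x)*(r3-x)) := by
      have hb1 : r2 - δ ≤ r2 - x := by linarith [hx.2]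
      have hb2 : r3 - δ ≤ r3 - x := by linarith [hx.2]
      have hA : r1*(x-r1) ≤ x*(x-r1) := by nlinarith
      have hBp : (0:ℝ) < (r2-δ)*(r3-δ) := mul_pos (by linarith) (by linarith)
      have hB : (r2-δ)*(r3-δ) ≤ (r2-x)*(r3-x) := by nlinarith
      nlinarith [mul_le_mul hA hB hBp.le (by positivity : (0:ℝ) ≤ x*(x-r1))]
    exact inv_sqrt_le (mul_pos hCpos hxr) hQ
  have hmint : IntervalIntegrable (fun x => (Real.sqrt (x*(x-r1)))⁻¹) volume r1 δ :=
    model1_integrable h1p hr1δ.le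
  have hval := model1_integral h1p hr1δ.le
  -- log bounds
  have hsδ : Real.sqrt δ ≤ 1/10 := by
    rw [show (1:ℝ)/10 = Real.sqrt ((1/10)^2) from (Real.sqrt_sq (by norm_num)).symm]
    apply Real.sqrt_le_sqrt; nlinarith
  have hsδr : Real.sqrt (δ - r1) ≤ Real.sqrt δ := Real.sqrt_le_sqrt (by linarith)
  have hsδp : 0 < Real.sqrt δ := Real.sqrt_pos.2 hδ0
  have hVup : 2*Real.log (Real.sqrt δ + Real.sqrt (δ-r1)) - Real.log r1 ≤ -Real.log z := by
    have e1 : Real.log (Real.sqrt δ + Real.sqrt (δ-r1)) ≤ 0 :=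
      Real.log_nonpos (by positivity) (by linarith)
    have e2 : Real.log (4*z) ≤ Real.log r1 := Real.log_le_log (by linarith [h.hz]) h.h1l
    have e3 : Real.log (4*z) = Real.log 4 + Real.log z :=
      Real.log_mul (by norm_num) (ne_of_gt h.hz)
    have e4 : (0:ℝ) ≤ Real.log 4 := Real.log_nonneg (by norm_num)
    linarith
  have hVlow : Real.log δ - Real.log z - 4
      ≤ 2*Real.log (Real.sqrt δ + Real.sqrt (δ-r1)) - Real.log r1 := by
    have e1 : Real.log (Real.sqrt δ) ≤ Real.log (Real.sqrt δ + Real.sqrt (δ-r1)) :=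
      Real.log_le_log hsδp (le_add_of_nonneg_right (Real.sqrt_nonneg _))
    have e1' : Real.log (Real.sqrt δ) = Real.log δ / 2 := Real.log_sqrt hδ0.le
    have e2 : Real.log r1 ≤ Real.log (9*z) := Real.log_le_log h1p h.h1u
    have e3 : Real.log (9*z) = Real.log 9 + Real.log z :=
      Real.log_mul (by norm_num) (ne_of_gt h.hz)
    have e4 : Real.log 9 ≤ 4 := by
      rw [show (9:ℝ) = 3*3 by norm_num, Real.log_mul (by norm_num) (by norm_num)]
      nlinarith [Real.log_le_sub_one_of_pos (show (0:ℝ) < 3 by norm_num)]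
    linarith
  refine ⟨hgint, ?_, ?_⟩
  · calc Real.log δ - Real.log z - 4
        ≤ 2*Real.log (Real.sqrt δ + Real.sqrt (δ-r1)) - Real.log r1 := hVlow
      _ = ∫ x in r1..δ, (Real.sqrt (x*(x-r1)))⁻¹ := hval.symm
      _ ≤ ∫ x in r1..δ, gfun r1 r2 r3 x :=
          intervalIntegral.integral_mono_on hr1δ.le hmint hgint hlow
  · calc ∫ x in r1..δ, gfun r1 r2 r3 x
        ≤ ∫ x in r1..δ, (1-2*δ)⁻¹ * (Real.sqrt (x*(x-r1)))⁻¹ :=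
          intervalIntegral.integral_mono_on hr1δ.le hgint (hmint.const_mul _) hup
      _ = (1-2*δ)⁻¹ * (2*Real.log (Real.sqrt δ + Real.sqrt (δ-r1)) - Real.log r1) := by
          rw [intervalIntegral.integral_const_mul, hval]
      _ ≤ (1-2*δ)⁻¹ * (-Real.log z) :=
          mul_le_mul_of_nonneg_left hVup (by positivity)

set_option maxHeartbeats 1600000 in
lemma piece2 {z r1 r2 r3 δ : ℝ} (h : RootData z r1 r2 r3)
    (hδ0 : 0 < δ) (hδ1 : δ ≤ 1/100) (hzδ : Real.sqrt z < δ/10) :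
    IntervalIntegrable (gfun r1 r2 r3) volume δ (1-δ) ∧
    0 ≤ ∫ x in δ..(1-δ), gfun r1 r2 r3 x ∧
    ∫ x in δ..(1-δ), gfun r1 r2 r3 x ≤ 2/δ^2 := by
  obtain ⟨h1p, hr1δ2, hδδ, h2δ, h23, h231⟩ := chain_facts h hδ0 hδ1 hzδ
  have h31 : 1 < r3 := by nlinarith [h.h3l, h.sq_pos]
  have hQlb : ∀ x ∈ Icc δ (1-δ), δ^4/4 ≤ x*(x-r1)*((r2-x)*(r3-x)) := by
    intro x hx
    have e1 : δ ≤ x := hx.1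
    have e2 : δ/2 ≤ x - r1 := by linarith
    have e3 : δ/2 ≤ r2 - x := by linarith [hx.2]
    have e4 : δ ≤ r3 - x := by linarith [hx.2]
    have p1 : δ*(δ/2) ≤ x*(x-r1) := by nlinarith
    have p2 : (δ/2)*δ ≤ (r2-x)*(r3-x) := by nlinarith
    nlinarith [mul_le_mul p1 p2 (by positivity) (by nlinarith : (0:ℝ) ≤ x*(x-r1))]
  have hcont : ContinuousOn (gfun r1 r2 r3) (Icc δ (1-δ)) := by
    unfold gfun
    apply ContinuousOn.inv₀
    · exact (Real.continuous_sqrt.comp (by continuity)).continuousOn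
    · intro x hx
      have h1 := hQlb x hx
      have h2 : (0:ℝ) < Real.sqrt (x*(x-r1)*((r2-x)*(r3-x))) :=
        Real.sqrt_pos.2 (by nlinarith [pow_pos hδ0 4])
      exact ne_of_gt h2
  have hint : IntervalIntegrable (gfun r1 r2 r3) volume δ (1-δ) :=
    ContinuousOn.intervalIntegrable (by rwa [uIcc_of_le (by linarith : δ ≤ 1-δ)])
  refine ⟨hint, intervalIntegral.integral_nonneg (by linarith)
    (fun x _ => gfun_nonneg r1 r2 r3 x), ?_⟩
  have hmono : ∀ x ∈ Icc δ (1-δ), gfun r1 r2 r3 x ≤ 2/δ^2 := by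
    intro x hx
    unfold gfun
    have hkey : (Real.sqrt (x*(x-r1)*((r2-x)*(r3-x))))⁻¹ ≤ (Real.sqrt (δ^4/4))⁻¹ :=
      inv_sqrt_le (by positivity) (hQlb x hx)
    have heq : Real.sqrt (δ^4/4) = δ^2/2 := by
      rw [show δ^4/4 = (δ^2/2)^2 by ring, Real.sqrt_sq (by positivity)]
    rw [heq] at hkey
    calc (Real.sqrt (x*(x-r1)*((r2-x)*(r3-x))))⁻¹ ≤ (δ^2/2)⁻¹ := hkey
      _ = 2/δ^2 := by field_simp
  calc ∫ x in δ..(1-δ), gfun r1 r2 r3 x ≤ ∫ _x in δ..(1-δ), 2/δ^2 :=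
        intervalIntegral.integral_mono_on (by linarith) hint intervalIntegrable_const hmono
    _ = (1-δ-δ) * (2/δ^2) := by rw [intervalIntegral.integral_const, smul_eq_mul]
    _ ≤ 2/δ^2 := by nlinarith [mul_pos hδ0 (show (0:ℝ) < 2/δ^2 by positivity)]

set_option maxHeartbeats 1600000 in
lemma piece3 {z r1 r2 r3 δ : ℝ} (h : RootData z r1 r2 r3)
    (hδ0 : 0 < δ) (hδ1 : δ ≤ 1/100) (hzδ : Real.sqrt z < δ/10) :
    IntervalIntegrable (gfun r1 r2 r3) volume (1-δ) r2 ∧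
    Real.log δ - (1/2)*Real.log z - 8 ≤ ∫ x in (1-δ)..r2, gfun r1 r2 r3 x ∧
    ∫ x in (1-δ)..r2, gfun r1 r2 r3 x ≤ (1-2*δ)⁻¹ * (-(1/2)*Real.log z) := by
  obtain ⟨h1p, hr1δ2, hδδ, h2δ, h23, h231⟩ := chain_facts h hδ0 hδ1 hzδ
  have hc2 : 1 - δ < r2 := by linarith
  have hδ2 : (1:ℝ) - 2*δ > 0 := by linarith
  have hsq := h.sq_pos
  have h32l := h.h32l
  have h32u := h.h32u
  have h2u := h.h2u
  have h3u := h.h3u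
  have h3l := h.h3l
  have hup : ∀ x ∈ Icc (1-δ) r2, gfun r1 r2 r3 x
      ≤ (1-2*δ)⁻¹ * (Real.sqrt ((r2-x)*(r3-x)))⁻¹ := by
    intro x hx
    rcases eq_or_lt_of_le hx.2 with he | hlt
    · unfold gfun
      rw [he, sub_self, zero_mul, mul_zero, Real.sqrt_zero, inv_zero]
      positivity
    · have h2x : 0 < r2 - x := by linarith
      have h3x : 0 < r3 - x := by linarith
      have hx0 : 0 < x := by linarith [hx.1]
      have hxr : 0 < x - r1 := by linarith [hx.1]
      have hA : (1-2*δ)^2 ≤ x*(x-r1) := by nlinarith [hx.1]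
      have hQ : (1-2*δ)^2 * ((r2-x)*(r3-x)) ≤ x*(x-r1)*((r2-x)*(r3-x)) := by
        nlinarith [mul_le_mul_of_nonneg_right hA (by positivity : (0:ℝ) ≤ (r2-x)*(r3-x))]
      unfold gfun
      calc (Real.sqrt (x*(x-r1)*((r2-x)*(r3-x))))⁻¹
          ≤ (Real.sqrt ((1-2*δ)^2 * ((r2-x)*(r3-x))))⁻¹ :=
            inv_sqrt_le (by positivity) hQ
        _ = (1-2*δ)⁻¹ * (Real.sqrt ((r2-x)*(r3-x)))⁻¹ := by
            rw [inv_sqrt_mul (by positivity), Real.sqrt_sq hδ2.le]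
  have hlow : ∀ x ∈ Icc (1-δ) r2, (Real.sqrt ((r2-x)*(r3-x)))⁻¹ ≤ gfun r1 r2 r3 x := by
    intro x hx
    rcases eq_or_lt_of_le hx.2 with he | hlt
    · unfold gfun
      rw [he, sub_self, zero_mul, mul_zero, Real.sqrt_zero, inv_zero]
    · have h2x : 0 < r2 - x := by linarith
      have h3x : 0 < r3 - x := by linarith
      have hx0 : 0 < x := by linarith [hx.1]
      have hxr : 0 < x - r1 := by linarith [hx.1]
      have hA : x*(x-r1) ≤ 1 := by nlinarith [h.h2lt1]
      have hQ : x*(x-r1)*((r2-x)*(r3-x)) ≤ (r2-x)*(r3-x) := by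
        nlinarith [mul_le_mul_of_nonneg_right hA (by positivity : (0:ℝ) ≤ (r2-x)*(r3-x))]
      unfold gfun
      exact inv_sqrt_le (mul_pos (mul_pos hx0 hxr) (mul_pos h2x h3x)) hQ
  have hgint : IntervalIntegrable (gfun r1 r2 r3) volume (1-δ) r2 := by
    have hCpos : (0:ℝ) < (1-δ)*((1-δ)-r1)*(r3-r2) :=
      mul_pos (mul_pos (by linarith) (by linarith)) (by linarith)
    apply integrable_dom2 (C := (1-δ)*((1-δ)-r1)*(r3-r2)) hCpos
      _ (gfun_meas r1 r2 r3) (gfun_nonneg r1 r2 r3) hc2.le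
    intro x hx
    rcases eq_or_lt_of_le hx.2 with he | hlt
    · unfold gfun
      rw [he]
      simp
    · have h2x : 0 < r2 - x := by linarith
      have h3x : 0 < r3 - x := by linarith
      have hx0 : 0 < x := by linarith [hx.1]
      have hxr : 0 < x - r1 := by linarith [hx.1]
      have hQ : (1-δ)*((1-δ)-r1)*(r3-r2)*(r2-x) ≤ x*(x-r1)*((r2-x)*(r3-x)) := by
        have hA : (1-δ)*((1-δ)-r1) ≤ x*(x-r1) := by nlinarith [hx.1]
        have hB : (r3-r2)*(r2-x) ≤ (r2-x)*(r3-x) := by nlinarith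
        nlinarith [mul_le_mul hA hB (mul_nonneg (by linarith) (by linarith))
          (mul_nonneg hx0.le hxr.le)]
      exact inv_sqrt_le (mul_pos (mul_pos (mul_pos (by linarith) (by linarith))
        (by linarith)) h2x) hQ
  have hmint : IntervalIntegrable (fun x => (Real.sqrt ((r2-x)*(r3-x)))⁻¹) volume (1-δ) r2 :=
    model2_integrable hc2.le h23
  have hval := model2_integral hc2.le h23
  have hs3 : Real.sqrt (r3-(1-δ)) ≤ 1/2 := by
    rw [show (1:ℝ)/2 = Real.sqrt ((1/2)^2) from (Real.sqrt_sq (by norm_num)).symm]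
    apply Real.sqrt_le_sqrt
    nlinarith
  have hs2 : Real.sqrt (r2-(1-δ)) ≤ 1/2 := by
    rw [show (1:ℝ)/2 = Real.sqrt ((1/2)^2) from (Real.sqrt_sq (by norm_num)).symm]
    apply Real.sqrt_le_sqrt
    nlinarith [h.h2lt1]
  have hsum_pos : 0 < Real.sqrt (r3-(1-δ)) + Real.sqrt (r2-(1-δ)) := by
    have e1 : 0 < Real.sqrt (r3-(1-δ)) := Real.sqrt_pos.2 (by linarith)
    have e2 := Real.sqrt_nonneg (r2-(1-δ))
    linarith
  have hVup : 2*Real.log (Real.sqrt (r3-(1-δ)) + Real.sqrt (r2-(1-δ))) - Real.log (r3-r2)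
      ≤ -(1/2)*Real.log z := by
    have e1 : Real.log (Real.sqrt (r3-(1-δ)) + Real.sqrt (r2-(1-δ))) ≤ 0 :=
      Real.log_nonpos hsum_pos.le (by linarith)
    have e2 : Real.log (Real.sqrt z) ≤ Real.log (r3-r2) := by
      apply Real.log_le_log hsq
      linarith
    rw [Real.log_sqrt h.hz.le] at e2
    linarith
  have hVlow : Real.log δ - (1/2)*Real.log z - 8
      ≤ 2*Real.log (Real.sqrt (r3-(1-δ)) + Real.sqrt (r2-(1-δ))) - Real.log (r3-r2) := by
    have hr2c : δ/2 ≤ r2-(1-δ) := by linarith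
    have e1 : Real.log (Real.sqrt (δ/2)) ≤ Real.log (Real.sqrt (r3-(1-δ)) + Real.sqrt (r2-(1-δ))) := by
      apply Real.log_le_log (Real.sqrt_pos.2 (by linarith))
      calc Real.sqrt (δ/2) ≤ Real.sqrt (r2-(1-δ)) := Real.sqrt_le_sqrt hr2c
        _ ≤ _ := le_add_of_nonneg_left (Real.sqrt_nonneg _)
    rw [Real.log_sqrt (by linarith : (0:ℝ) ≤ δ/2)] at e1
    have e1' : Real.log (δ/2) = Real.log δ - Real.log 2 := by
      rw [Real.log_div (ne_of_gt hδ0) (by norm_num)]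
    have e2 : Real.log (r3-r2) ≤ Real.log (8*Real.sqrt z) :=
      Real.log_le_log (by linarith) (by linarith)
    have e3 : Real.log (8*Real.sqrt z) = Real.log 8 + Real.log z / 2 := by
      rw [Real.log_mul (by norm_num) (ne_of_gt hsq), Real.log_sqrt h.hz.le]
    have e4 : Real.log 8 ≤ 7 := by
      nlinarith [Real.log_le_sub_one_of_pos (show (0:ℝ) < 8 by norm_num)]
    have e5 : Real.log 2 ≤ 1 := by
      nlinarith [Real.log_le_sub_one_of_pos (show (0:ℝ) < 2 by norm_num)]
    linarith
  refine ⟨hgint, ?_, ?_⟩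
  · calc Real.log δ - (1/2)*Real.log z - 8
        ≤ 2*Real.log (Real.sqrt (r3-(1-δ)) + Real.sqrt (r2-(1-δ))) - Real.log (r3-r2) := hVlow
      _ = ∫ x in (1-δ)..r2, (Real.sqrt ((r2-x)*(r3-x)))⁻¹ := hval.symm
      _ ≤ ∫ x in (1-δ)..r2, gfun r1 r2 r3 x :=
          intervalIntegral.integral_mono_on hc2.le hmint hgint hlow
  · calc ∫ x in (1-δ)..r2, gfun r1 r2 r3 x
        ≤ ∫ x in (1-δ)..r2, (1-2*δ)⁻¹ * (Real.sqrt ((r2-x)*(r3-x)))⁻¹ :=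
          intervalIntegral.integral_mono_on hc2.le hgint (hmint.const_mul _) hup
      _ = (1-2*δ)⁻¹ * (2*Real.log (Real.sqrt (r3-(1-δ)) + Real.sqrt (r2-(1-δ))) - Real.log (r3-r2)) := by
          rw [intervalIntegral.integral_const_mul, hval]
      _ ≤ (1-2*δ)⁻¹ * (-(1/2)*Real.log z) :=
          mul_le_mul_of_nonneg_left hVup (by positivity)

/-- The period function T(z) = 2∫_{xmin(z)}^{xmax(z)} dx/√(x²(1-x)² - 4zx). -/
noncomputable def Tfun (z : ℝ) : ℝ :=
  2 * ∫ x in xminf z..xmaxf z, 1 / Real.sqrt (x ^ 2 * (1 - x) ^ 2 - 4 * z * x)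


set_option maxHeartbeats 1600000 in
lemma main_bounds {z δ : ℝ} (hz : 0 < z) (hzs : z < 1/10000)
    (hδ0 : 0 < δ) (hδ1 : δ ≤ 1/100) (hzδ : Real.sqrt z < δ/10) :
    2*Real.log δ - (3/2)*Real.log z - 12 ≤ Tfun z / 2 ∧
    Tfun z / 2 ≤ (1-2*δ)⁻¹ * (-(3/2)*Real.log z) + 2/δ^2 := by
  have h := rootData hz hzs
  set r1 := xminf z with hr1
  set r2 := xmaxf z with hr2
  set r3 := 2 - xminf z - xmaxf z with hr3
  obtain ⟨h1p, hr1δ2, hδδ, h2δ, h23, h231⟩ := chain_facts h hδ0 hδ1 hzδ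
  have heqI : Tfun z / 2 = ∫ x in r1..r2, gfun r1 r2 r3 x := by
    unfold Tfun
    rw [show (2:ℝ) * (∫ x in xminf z..xmaxf z, 1 / Real.sqrt (x ^ 2 * (1 - x) ^ 2 - 4 * z * x)) / 2
      = ∫ x in xminf z..xmaxf z, 1 / Real.sqrt (x ^ 2 * (1 - x) ^ 2 - 4 * z * x) by ring]
    apply intervalIntegral.integral_congr
    intro x _
    unfold gfun
    have harg : x ^ 2 * (1 - x) ^ 2 - 4 * z * x = x*(x-r1)*((r2-x)*(r3-x)) := by
      linear_combination x * h.fac x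
    simp only [one_div, harg]
  obtain ⟨int1, low1, up1⟩ := piece1 h hδ0 hδ1 hzδ
  obtain ⟨int2, low2, up2⟩ := piece2 h hδ0 hδ1 hzδ
  obtain ⟨int3, low3, up3⟩ := piece3 h hδ0 hδ1 hzδ
  have e1 : (∫ x in r1..δ, gfun r1 r2 r3 x) + (∫ x in δ..(1-δ), gfun r1 r2 r3 x)
      = ∫ x in r1..(1-δ), gfun r1 r2 r3 x :=
    intervalIntegral.integral_add_adjacent_intervals int1 int2
  have e2 : (∫ x in r1..(1-δ), gfun r1 r2 r3 x) + (∫ x in (1-δ)..r2, gfun r1 r2 r3 x)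
      = ∫ x in r1..r2, gfun r1 r2 r3 x :=
    intervalIntegral.integral_add_adjacent_intervals (int1.trans int2) int3
  have hδ2 : (0:ℝ) < (1-2*δ)⁻¹ := by
    have : (0:ℝ) < 1-2*δ := by linarith
    positivity
  constructor
  · rw [heqI]
    linarith
  · rw [heqI]
    have comb : (1-2*δ)⁻¹ * (-Real.log z) + (1-2*δ)⁻¹ * (-(1/2)*Real.log z)
        = (1-2*δ)⁻¹ * (-(3/2)*Real.log z) := by ring
    linarith

/-- T(z) ~ -3 ln z as z → 0⁺, i.e. T(z)/(-3 ln z) → 1. -/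
theorem stmt_11 :
    Tendsto (fun z => Tfun z / (-3 * Real.log z)) (nhdsWithin 0 (Ioi 0)) (nhds 1) := by
  have hL : Tendsto (fun z : ℝ => 3*(-Real.log z)) (nhdsWithin 0 (Ioi 0)) atTop := by
    apply Filter.Tendsto.const_mul_atTop (by norm_num : (0:ℝ) < 3)
    exact Filter.tendsto_neg_atBot_atTop.comp Real.tendsto_log_nhdsGT_zero
  have hmem : ∀ t : ℝ, 0 < t → Ioo (0:ℝ) t ∈ nhdsWithin (0:ℝ) (Ioi 0) :=
    fun t ht => Ioo_mem_nhdsGT_of_mem ⟨le_refl 0, ht⟩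
  rw [tendsto_order]
  constructor
  · -- lower bound direction
    intro a ha
    set c : ℝ := 2*Real.log (1/100) - 12 with hc
    have htlb : Tendsto (fun z : ℝ => 1 + (2*c)/(3*(-Real.log z)))
        (nhdsWithin 0 (Ioi 0)) (nhds 1) := by
      have := (tendsto_const_nhds (x := (2*c : ℝ))
        (f := nhdsWithin (0:ℝ) (Ioi 0))).div_atTop hL
      have h2 := (tendsto_const_nhds (x := (1:ℝ))
        (f := nhdsWithin (0:ℝ) (Ioi 0))).add this
      simpa using h2
    filter_upwards [hmem (1/10000000) (by norm_num),
      htlb.eventually_const_lt ha] with z hz htail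
    have hz0 : 0 < z := hz.1
    have hzs : z < 1/10000 := by linarith [hz.2]
    have hδ0 : (0:ℝ) < 1/100 := by norm_num
    have hzδ : Real.sqrt z < (1/100)/10 := by
      have h1 : Real.sqrt z < Real.sqrt ((1/1000)^2) :=
        Real.sqrt_lt_sqrt hz0.le (by nlinarith [hz.2])
      rw [Real.sqrt_sq (by norm_num)] at h1
      linarith
    obtain ⟨hlow, _⟩ := main_bounds hz0 hzs hδ0 (le_refl _) hzδ
    have hLpos : 0 < -Real.log z := by
      have : Real.log z < 0 := Real.log_neg hz0 (by linarith [hz.2])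
      linarith
    have hineq : 3*(-Real.log z) + 2*c ≤ Tfun z := by
      rw [hc]; linarith
    calc a < 1 + (2*c)/(3*(-Real.log z)) := htail
      _ = (3*(-Real.log z) + 2*c)/(3*(-Real.log z)) := by
          rw [add_div, div_self (ne_of_gt (by linarith : (0:ℝ) < 3*(-Real.log z)))]
      _ ≤ Tfun z / (3*(-Real.log z)) := by
          gcongr
      _ = Tfun z / (-3 * Real.log z) := by ring_nf
  · -- upper bound direction
    intro a ha
    set δ : ℝ := min (1/100) ((a-1)/8) with hδ
    have hδ0 : 0 < δ := lt_min (by norm_num) (by linarith)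
    have hδ1 : δ ≤ 1/100 := min_le_left _ _
    have hδa : (1-2*δ)⁻¹ < a := by
      have h1 : δ ≤ (a-1)/8 := min_le_right _ _
      have h2 : (0:ℝ) < 1-2*δ := by linarith
      have key : (1-2*δ)⁻¹ * (1-2*δ) = 1 := inv_mul_cancel₀ (ne_of_gt h2)
      have tpos : (0:ℝ) < (1-2*δ)⁻¹ := inv_pos.2 h2
      rcases le_or_gt a 2 with hcase | hcase
      · nlinarith [key, tpos, h2, h1, hδ0]
      · nlinarith [key, tpos, h2, hδ1, hδ0]
    have htub : Tendsto (fun z : ℝ => (1-2*δ)⁻¹ + (4/δ^2)/(3*(-Real.log z)))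
        (nhdsWithin 0 (Ioi 0)) (nhds ((1-2*δ)⁻¹)) := by
      have h1 := (tendsto_const_nhds (x := (4/δ^2 : ℝ))
        (f := nhdsWithin (0:ℝ) (Ioi 0))).div_atTop hL
      have h2 := (tendsto_const_nhds (x := ((1-2*δ)⁻¹ : ℝ))
        (f := nhdsWithin (0:ℝ) (Ioi 0))).add h1
      simpa using h2
    filter_upwards [hmem (δ^2/100) (by positivity),
      htub.eventually_lt_const hδa] with z hz htail
    have hz0 : 0 < z := hz.1
    have hzs : z < 1/10000 := by nlinarith [hz.2, hδ0, hδ1]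
    have hzδ : Real.sqrt z < δ/10 := by
      have : Real.sqrt z < Real.sqrt ((δ/10)^2) :=
        Real.sqrt_lt_sqrt hz0.le (by nlinarith [hz.2])
      rwa [Real.sqrt_sq (by positivity)] at this
    obtain ⟨_, hup⟩ := main_bounds hz0 hzs hδ0 hδ1 hzδ
    have hLpos : 0 < -Real.log z := by
      have : Real.log z < 0 := Real.log_neg hz0 (by nlinarith [hz.2, hδ1])
      linarith
    have hineq : Tfun z ≤ (1-2*δ)⁻¹ * (3*(-Real.log z)) + 4/δ^2 := by
      have e1 : (1-2*δ)⁻¹ * (-(3/2)*Real.log z) * 2 = (1-2*δ)⁻¹ * (3*(-Real.log z)) := by ring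
      have e2 : (4:ℝ)/δ^2 = 2*(2/δ^2) := by ring
      linarith
    calc Tfun z / (-3*Real.log z) = Tfun z / (3*(-Real.log z)) := by ring_nf
      _ ≤ ((1-2*δ)⁻¹ * (3*(-Real.log z)) + 4/δ^2)/(3*(-Real.log z)) := by
          gcongr
      _ = (1-2*δ)⁻¹ + (4/δ^2)/(3*(-Real.log z)) := by
          rw [add_div, mul_div_assoc, div_self (ne_of_gt (by linarith : (0:ℝ) < 3*(-Real.log z))), mul_one]
      _ < a := htail
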